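/- For $\alpha > -1/2$, $k \ge 1$, and $i \ge 0$, the Legendre coefficients satisfy $F_i^{\alpha+k} = \frac{T^k\,[(\alpha+1)(\alpha+2)\cdots(\alpha+k)]^2}{(\alpha-i+1)\cdots(\alpha-i+k)\,(\alpha+i+2)\cdots(\alpha+i+k+1)}\,F_i^\alpha$, provided the denominator is nonzero. -/

import Mathlib

open Real

noncomputable def legendreP (i : ℕ) (x : ℝ) : ℝ :=
  (1 / (2 ^ i * (Nat.factorial i))) * iteratedDeriv i (fun y : ℝ => (y ^ 2 - 1) ^ i) x

noncomputable def legendreHat (T : ℝ) (i : ℕ) (t : ℝ) : ℝ :=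
  Real.sqrt ((2 * i + 1) / T) * legendreP i (2 * t / T - 1)

noncomputable def F (T α : ℝ) (i : ℕ) : ℝ := ∫ t in (0:ℝ)..T, t ^ α * legendreHat T i t


section Aux
open Polynomial

noncomputable def Lp (i : ℕ) : ℝ[X] :=
  C ((1 : ℝ) / (2 ^ i * (Nat.factorial i))) * derivative^[i] ((X ^ 2 - 1) ^ i)

lemma deriv_iterate_eval (n : ℕ) (p : ℝ[X]) :
    deriv^[n] (fun x => p.eval x) = fun x => (derivative^[n] p).eval x := by
  induction n generalizing p with
  | zero => simp
  | succ n ih =>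
      rw [Function.iterate_succ_apply, Function.iterate_succ_apply]
      rw [show deriv (fun x => p.eval x) = fun x => (derivative p).eval x from
        funext fun x => Polynomial.deriv p]
      exact ih _

lemma legendreP_eq' (i : ℕ) (x : ℝ) :
    (1 / (2 ^ i * (Nat.factorial i) : ℝ)) * iteratedDeriv i (fun y : ℝ => (y ^ 2 - 1) ^ i) x
      = (Lp i).eval x := by
  have h : (fun y : ℝ => (y ^ 2 - 1) ^ i)
      = fun y : ℝ => (((X : ℝ[X]) ^ 2 - 1) ^ i).eval y := by
    funext y; simp
  rw [h, iteratedDeriv_eq_iterate, deriv_iterate_eval]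
  simp [Lp]

lemma iterD_add (n : ℕ) (p q : ℝ[X]) :
    derivative^[n] (p + q) = derivative^[n] p + derivative^[n] q := by
  induction n generalizing p q with
  | zero => simp
  | succ n ih => simp [Function.iterate_succ_apply, derivative_add, ih]

lemma hdX : derivative ((X:ℝ[X]) ^ 2 - 1) = 2 * X := by
  simp [derivative_pow, map_ofNat]

lemma iterA (p : ℝ[X]) (n : ℕ) :
    derivative^[n + 1] (X * p)
      = X * derivative^[n + 1] p + ((n : ℝ[X]) + 1) * derivative^[n] p := by
  induction n generalizing p with
  | zero => simp [derivative_mul]; ring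
  | succ n ih =>
      rw [Function.iterate_succ_apply, derivative_mul, derivative_X, one_mul,
        iterD_add, ih (derivative p)]
      rw [← Function.iterate_succ_apply, ← Function.iterate_succ_apply]
      push_cast
      ring

lemma iterB (p : ℝ[X]) (n : ℕ) :
    derivative^[n + 2] ((X ^ 2 - 1) * p)
      = (X ^ 2 - 1) * derivative^[n + 2] p
        + (2 * ((n : ℝ[X]) + 2)) * (X * derivative^[n + 1] p)
        + (((n : ℝ[X]) + 2) * ((n : ℝ[X]) + 1)) * derivative^[n] p := by
  induction n generalizing p with
  | zero =>
      show derivative (derivative ((X ^ 2 - 1) * p)) = _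
      simp [Function.iterate_succ_apply', derivative_mul, derivative_sub,
        derivative_pow, map_ofNat, derivative_ofNat]
      push_cast
      ring
  | succ n ih =>
      rw [Function.iterate_succ_apply, derivative_mul, hdX]
      rw [iterD_add]
      have h2 : derivative^[n + 2] (2 * X * p) = 2 * derivative^[n + 2] (X * p) := by
        rw [mul_assoc, show (2 : ℝ[X]) = C 2 from (map_ofNat C 2).symm,
          iterate_derivative_C_mul]
      rw [h2, iterA p (n + 1), ih (derivative p)]
      rw [show derivative^[n+2] (derivative p) = derivative^[n+3] p from
            (Function.iterate_succ_apply _ _ _).symm,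
          show derivative^[n+1] (derivative p) = derivative^[n+2] p from
            (Function.iterate_succ_apply _ _ _).symm,
          show derivative^[n] (derivative p) = derivative^[n+1] p from
            (Function.iterate_succ_apply _ _ _).symm]
      simp only [show n+1+2 = n+3 by omega, show n+1+1 = n+2 by omega]
      push_cast
      ring

lemma odeY (i : ℕ) :
    derivative (((X:ℝ[X]) ^ 2 - 1) * derivative (derivative^[i] (((X:ℝ[X]) ^ 2 - 1) ^ i)))
      = ((i : ℝ[X]) * ((i : ℝ[X]) + 1)) * derivative^[i] (((X:ℝ[X]) ^ 2 - 1) ^ i) := by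
  cases i with
  | zero => simp
  | succ j =>
      set u : ℝ[X] := ((X:ℝ[X]) ^ 2 - 1) ^ (j + 1) with hu
      have hE : ((X:ℝ[X]) ^ 2 - 1) * derivative u = C ((2:ℝ) * (j + 1)) * (X * u) := by
        rw [hu, derivative_pow, hdX]
        push_cast
        rw [show C ((2:ℝ) * ((j:ℝ) + 1)) = 2 * C ((j:ℝ) + 1) by rw [map_mul, map_ofNat]]
        ring
      have h1 := congrArg (derivative^[j+2]) hE
      rw [iterB (derivative u) j, iterate_derivative_C_mul, iterA u (j+1)] at h1
      rw [show derivative^[j+2] (derivative u) = derivative^[j+3] u from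
            (Function.iterate_succ_apply _ _ _).symm,
          show derivative^[j+1] (derivative u) = derivative^[j+2] u from
            (Function.iterate_succ_apply _ _ _).symm,
          show derivative^[j] (derivative u) = derivative^[j+1] u from
            (Function.iterate_succ_apply _ _ _).symm] at h1
      rw [show derivative (derivative^[j+1] u) = derivative^[j+2] u from
            (Function.iterate_succ_apply' _ _ _).symm,
          derivative_mul, hdX,
          show derivative (derivative^[j+2] u) = derivative^[j+3] u from
            (Function.iterate_succ_apply' _ _ _).symm]
      rw [show C ((2:ℝ) * (j + 1)) = 2 * ((j:ℝ[X]) + 1) by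
          rw [← map_ofNat C 2]; push_cast [C_eq_natCast]; simp] at h1
      simp only [show j + 1 + 1 = j + 2 by omega] at h1
      push_cast at h1 ⊢
      linear_combination h1

lemma odeLp (i : ℕ) :
    derivative (((X:ℝ[X]) ^ 2 - 1) * derivative (Lp i))
      = ((i : ℝ[X]) * ((i : ℝ[X]) + 1)) * Lp i := by
  unfold Lp
  rw [derivative_C_mul, mul_left_comm, derivative_C_mul, odeY]
  ring

lemma odeM (i : ℕ) :
    derivative (((X:ℝ[X]) ^ 2 - X) * derivative ((Lp i).comp (2 * X - 1)))
      = ((i : ℝ[X]) * ((i : ℝ[X]) + 1)) * (Lp i).comp (2 * X - 1) := by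
  have hq : derivative (2 * (X:ℝ[X]) - 1) = 2 := by simp
  have key : (2:ℝ[X]) * ((((X:ℝ[X]) ^ 2 - X)) * derivative ((Lp i).comp (2 * X - 1)))
      = (((X:ℝ[X]) ^ 2 - 1) * derivative (Lp i)).comp (2 * X - 1) := by
    rw [derivative_comp, hq, mul_comp, sub_comp, pow_comp, X_comp, one_comp]
    ring
  have two_mul_deriv : ∀ p : ℝ[X], derivative (2 * p) = 2 * derivative p := fun p => by
    rw [show (2:ℝ[X]) = C 2 from (map_ofNat C 2).symm, derivative_C_mul]
  have h3 : derivative (((((X:ℝ[X]) ^ 2 - 1)) * derivative (Lp i)).comp (2 * X - 1))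
      = 2 * (((i : ℝ[X]) * ((i : ℝ[X]) + 1)) * (Lp i).comp (2 * X - 1)) := by
    rw [derivative_comp, hq, odeLp, mul_comp, mul_comp, natCast_comp, add_comp,
      natCast_comp, one_comp]
  have h4 : derivative (((((X:ℝ[X]) ^ 2 - 1)) * derivative (Lp i)).comp (2 * X - 1))
      = 2 * derivative (((X:ℝ[X]) ^ 2 - X) * derivative ((Lp i).comp (2 * X - 1))) := by
    rw [← key, two_mul_deriv]
  exact mul_left_cancel₀ (two_ne_zero (α := ℝ[X])) (h4.symm.trans h3)

lemma LpEval1 (i : ℕ) : (Lp i).eval 1 = 1 := by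
  have hfac : derivative^[i] (((X:ℝ[X]) ^ 2 - 1) ^ i)
      = (i.factorial) • hasseDeriv i (((X:ℝ[X]) ^ 2 - 1) ^ i) := by
    rw [← factorial_smul_hasseDeriv]; rfl
  have htay : (taylor (1:ℝ) (((X:ℝ[X]) ^ 2 - 1) ^ i)).coeff i = 2 ^ i := by
    rw [taylor_apply, pow_comp, sub_comp, pow_comp, X_comp, one_comp]
    rw [show ((X:ℝ[X]) + C 1) ^ 2 - 1 = X * (X + 2) by rw [C_1]; ring]
    have hc := coeff_X_pow_mul (((X:ℝ[X]) + 2) ^ i) i 0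
    rw [zero_add] at hc
    rw [mul_pow, hc, coeff_zero_eq_eval_zero]
    simp
  have heval : (hasseDeriv i (((X:ℝ[X]) ^ 2 - 1) ^ i)).eval 1 = 2 ^ i := by
    rw [← taylor_coeff, htay]
  rw [Lp, eval_mul, eval_C, hfac, eval_smul, ← taylor_coeff, htay, nsmul_eq_mul]
  have h2 : ((2:ℝ) ^ i) ≠ 0 := by positivity
  have hf : ((i.factorial : ℝ)) ≠ 0 := by positivity
  field_simp

noncomputable def Mi (i : ℕ) : ℝ[X] := (Lp i).comp (2 * X - 1)

noncomputable def J (i : ℕ) (β : ℝ) : ℝ := ∫ x in (0:ℝ)..1, x ^ β * (Mi i).eval x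

lemma intg (β : ℝ) (hβ : -1 < β) (p : ℝ[X]) :
    IntervalIntegrable (fun x => x ^ β * p.eval x) MeasureTheory.volume 0 1 :=
  (intervalIntegral.intervalIntegrable_rpow' hβ).mul_continuousOn
    (p.continuous_aeval).continuousOn

lemma ibp (β : ℝ) (hβ : 0 < β) (p : ℝ[X]) :
    ∫ x in (0:ℝ)..1, x ^ β * (derivative p).eval x
      = p.eval 1 - β * ∫ x in (0:ℝ)..1, x ^ (β - 1) * p.eval x := by
  have hcont : ContinuousOn (fun x : ℝ => x ^ β * p.eval x) (Set.Icc 0 1) :=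
    (continuousOn_id.rpow_const fun x _ => Or.inr hβ.le).mul
      (p.continuous_aeval).continuousOn
  have hderiv : ∀ x ∈ Set.Ioo (0:ℝ) 1, HasDerivWithinAt (fun x : ℝ => x ^ β * p.eval x)
      (β * (x ^ (β - 1) * p.eval x) + x ^ β * (derivative p).eval x) (Set.Ioi x) x := by
    intro x hx
    have h1 : HasDerivAt (fun x : ℝ => x ^ β) (β * x ^ (β - 1)) x :=
      Real.hasDerivAt_rpow_const (Or.inl hx.1.ne')
    have h2 := h1.mul (p.hasDerivAt x)
    have h3 : β * x ^ (β - 1) * p.eval x + x ^ β * (derivative p).eval x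
        = β * (x ^ (β - 1) * p.eval x) + x ^ β * (derivative p).eval x := by ring
    rw [h3] at h2
    exact h2.hasDerivWithinAt
  have i1 := (intg (β - 1) (by linarith) p).const_mul β
  have i2 := intg β (by linarith) (derivative p)
  have hint := i1.add i2
  have heq := intervalIntegral.integral_eq_sub_of_hasDeriv_right_of_le
    (by norm_num) hcont hderiv hint
  rw [intervalIntegral.integral_add i1 i2, intervalIntegral.integral_const_mul] at heq
  rw [Real.one_rpow, Real.zero_rpow hβ.ne', one_mul, zero_mul, sub_zero] at heq
  linarith

lemma keystep (i : ℕ) (α : ℝ) (hα : -(1/2 : ℝ) < α) :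
    ((α + 1 - i) * (α + 2 + i)) * J i (α + 1) = (α + 1) ^ 2 * J i α := by
  set M : ℝ[X] := Mi i with hM
  set R : ℝ[X] := (X ^ 2 - X) * derivative M with hR
  have hM1 : M.eval 1 = 1 := by
    rw [hM, Mi, eval_comp]
    norm_num [LpEval1]
  have hDR : ∀ x : ℝ, (derivative R).eval x = (i * (i + 1) : ℝ) * M.eval x := by
    intro x
    rw [hR, hM, Mi, odeM]
    push_cast [eval_mul, eval_add, eval_natCast, eval_one]
    ring
  have hαn : (0:ℝ) < α + 1 := by linarith
  -- Eq1 : ibp with p = R, β = α+1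
  have e1 := ibp (α + 1) hαn R
  rw [add_sub_cancel_right] at e1
  have hR1 : R.eval 1 = 0 := by simp [hR]
  -- LHS of e1 equals i(i+1) * J i (α+1)
  have eL : (∫ x in (0:ℝ)..1, x ^ (α+1) * (derivative R).eval x)
      = (i * (i + 1) : ℝ) * J i (α + 1) := by
    rw [show (fun x : ℝ => x ^ (α+1) * (derivative R).eval x)
          = fun x : ℝ => (i * (i + 1) : ℝ) * (x ^ (α+1) * M.eval x) by
        funext x; rw [hDR x]; ring]
    rw [intervalIntegral.integral_const_mul, J]
  -- ∫ x^α R = ∫ x^(α+2) M' - ∫ x^(α+1) M'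
  have eR : (∫ x in (0:ℝ)..1, x ^ α * R.eval x)
      = (∫ x in (0:ℝ)..1, x ^ (α + 2) * (derivative M).eval x)
        - ∫ x in (0:ℝ)..1, x ^ (α + 1) * (derivative M).eval x := by
    rw [← intervalIntegral.integral_sub (intg (α+2) (by linarith) _)
        (intg (α+1) (by linarith) _)]
    apply intervalIntegral.integral_congr
    intro x hx
    dsimp only
    rw [Set.uIcc_of_le (by norm_num : (0:ℝ) ≤ 1)] at hx
    rcases eq_or_lt_of_le hx.1 with h0 | h0
    · simp only [← h0]
      rw [show R.eval 0 = 0 by simp [hR], mul_zero,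
        Real.zero_rpow (by linarith : α + 2 ≠ 0),
        Real.zero_rpow (by linarith : α + 1 ≠ 0)]
      ring
    · have hne := h0.ne'
      rw [hR, eval_mul, show α + 2 = α + 1 + 1 by ring, Real.rpow_add_one hne,
        Real.rpow_add_one hne]
      simp only [eval_sub, eval_pow, eval_X]
      ring
  -- Eq2, Eq3
  have e2 := ibp (α + 2) (by linarith) M
  rw [show α + 2 - 1 = α + 1 by ring, hM1] at e2
  have e3 := ibp (α + 1) hαn M
  rw [add_sub_cancel_right, hM1] at e3
  rw [eL, hR1, eR, e2, e3] at e1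
  have hJ1 : (∫ x in (0:ℝ)..1, x ^ (α+1) * M.eval x) = J i (α+1) := rfl
  have hJ0 : (∫ x in (0:ℝ)..1, x ^ α * M.eval x) = J i α := rfl
  rw [hJ1, hJ0] at e1
  linear_combination -e1

lemma F_eq (T : ℝ) (hT : 0 < T) (α : ℝ) (i : ℕ) :
    F T α i = Real.sqrt ((2 * i + 1) / T) * (T * T ^ α) * J i α := by
  have hP : ∀ y : ℝ, legendreP i y = (Lp i).eval y := fun y => legendreP_eq' i y
  have h1 : (fun t : ℝ => t ^ α * legendreHat T i t)
      = fun t : ℝ => Real.sqrt ((2 * i + 1) / T) * (t ^ α * (Lp i).eval (2 * t / T - 1)) := by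
    funext t
    rw [legendreHat, hP]
    ring
  rw [F, h1, intervalIntegral.integral_const_mul]
  have hsub := intervalIntegral.smul_integral_comp_mul_left
    (fun t : ℝ => t ^ α * (Lp i).eval (2 * t / T - 1)) (a := 0) (b := 1) T
  rw [mul_zero, mul_one] at hsub
  rw [← hsub, smul_eq_mul]
  have h3 : (∫ x in (0:ℝ)..1, (T * x) ^ α * (Lp i).eval (2 * (T * x) / T - 1))
      = ∫ x in (0:ℝ)..1, T ^ α * (x ^ α * (Mi i).eval x) := by
    apply intervalIntegral.integral_congr
    intro x hx
    dsimp only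
    rw [Set.uIcc_of_le (by norm_num : (0:ℝ) ≤ 1)] at hx
    rw [Real.mul_rpow hT.le hx.1, show 2 * (T * x) / T - 1 = 2 * x - 1 by
      field_simp, Mi, eval_comp]
    have : (2 * (X:ℝ[X]) - 1).eval x = 2 * x - 1 := by simp
    rw [this]
    ring
  rw [h3, intervalIntegral.integral_const_mul, J]
  ring

lemma Fstep (T : ℝ) (hT : 0 < T) (i : ℕ) (β : ℝ) (hβ : -(1/2 : ℝ) < β)
    (h1 : β + 1 - i ≠ 0) (h2 : β + 2 + i ≠ 0) :
    F T (β + 1) i = T * (β + 1) ^ 2 / ((β + 1 - i) * (β + 2 + i)) * F T β i := by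
  rw [F_eq T hT (β + 1) i, F_eq T hT β i]
  have hk := keystep i β hβ
  have hD : (β + 1 - i) * (β + 2 + i) ≠ 0 := mul_ne_zero h1 h2
  have hJ : J i (β + 1) = (β + 1) ^ 2 / ((β + 1 - i) * (β + 2 + i)) * J i β := by
    field_simp
    linarith [hk]
  rw [hJ, Real.rpow_add_one hT.ne']
  field_simp


end Aux

theorem legendre_coeff_power_shift (T α : ℝ) (hT : 0 < T) (hα : -(1/2 : ℝ) < α)
    (k : ℕ) (hk : 1 ≤ k) (i : ℕ)
    (hden : (∏ m ∈ Finset.Icc 1 k, (α - i + m)) * (∏ m ∈ Finset.Icc 1 k, (α + i + 1 + m)) ≠ 0) :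
    F T (α + k) i
      = T ^ (k : ℕ) * (∏ m ∈ Finset.Icc 1 k, (α + m)) ^ 2
          / ((∏ m ∈ Finset.Icc 1 k, (α - i + m)) * (∏ m ∈ Finset.Icc 1 k, (α + i + 1 + m)))
          * F T α i := by
  induction k with
  | zero => exact absurd hk (by norm_num)
  | succ n ih =>
      rcases Nat.eq_zero_or_pos n with hn | hn
      · subst hn
        simp only [Finset.Icc_self, Finset.prod_singleton] at hden ⊢
        push_cast at hden ⊢
        rcases mul_ne_zero_iff.1 hden with ⟨ha, hb⟩
        have h1 : α + 1 - i ≠ 0 := by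
          intro h; exact ha (by linarith)
        have h2 : α + 2 + i ≠ 0 := by
          intro h; exact hb (by linarith)
        have hstep := Fstep T hT i α hα h1 h2
        rw [show α - ↑i + 1 = α + 1 - ↑i by ring, show α + ↑i + 1 + 1 = α + 2 + ↑i by ring,
          pow_one]
        exact hstep
      · rw [Finset.prod_Icc_succ_top (by omega), Finset.prod_Icc_succ_top (by omega)] at hden
        rw [Finset.prod_Icc_succ_top (by omega), Finset.prod_Icc_succ_top (by omega),
          Finset.prod_Icc_succ_top (by omega)]
        rcases mul_ne_zero_iff.1 hden with ⟨hP, hQ⟩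
        rcases mul_ne_zero_iff.1 hP with ⟨hPd, ha⟩
        rcases mul_ne_zero_iff.1 hQ with ⟨hQd, hb⟩
        have ih' := ih hn (mul_ne_zero hPd hQd)
        have hcn : (0:ℝ) ≤ (n:ℝ) := Nat.cast_nonneg n
        have h1 : (α + n) + 1 - i ≠ 0 := by
          intro h; apply ha; push_cast; linarith
        have h2 : (α + n) + 2 + i ≠ 0 := by
          intro h; apply hb; push_cast; linarith
        have hstep := Fstep T hT i (α + n) (by linarith) h1 h2
        rw [show ((α:ℝ) + n) + 1 = α + (n+1 : ℕ) by push_cast; ring] at hstep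
        rw [hstep, ih']
        have hae : (α - ↑i + ↑(n+1) : ℝ) = (α + n) + 1 - i := by push_cast; ring
        have hbe : (α + ↑i + 1 + ↑(n+1) : ℝ) = (α + n) + 2 + i := by push_cast; ring
        have hce : (α + ↑(n+1) : ℝ) = α + n + 1 := by push_cast; ring
        rw [hae, hbe, hce, pow_succ]
        have hPd' := hPd
        field_simp
        ring
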